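/- Let n ≥ 1 and τ ≥ 1 be integers and set T = n·τ. For each i ∈ {1, …, n} and j ∈ {1, …, τ}, let w_{i,j} : {−1,+1}ⁿ → [−1, 1] be a function such that w_{i,j}(ε) = w_{i,j}(ε′) whenever ε_k = ε′_k for all k < i (i.e. w_{i,j} depends only on the coordinates ε₁, …, ε_{i−1}). Then 2^{−n} · Σ_{ε ∈ {−1,+1}ⁿ} ( Σ_{i=1}^n Σ_{j=1}^τ ε_i · w_{i,j}(ε) + τ·|Σ_{i=1}^n ε_i| ) ≥ τ·√n/√2 = √(τ·T)/√2. -/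

import Mathlib

open Finset

-- central binomial sqrt bound
lemma centralBinom_sqrt_bound : ∀ k : ℕ, 1 ≤ k →
    (4:ℝ)^k ≤ 2 * Real.sqrt k * (Nat.centralBinom k : ℝ) := by
  intro k hk
  induction k with
  | zero => omega
  | succ k ih =>
    rcases Nat.eq_or_lt_of_le hk with h1 | h1
    · simp [← h1, Nat.centralBinom]
      norm_num [Real.sqrt_one, Nat.choose]
    · have hk1 : 1 ≤ k := by omega
      have IH := ih hk1
      have hrec : ((k+1 : ℕ) : ℝ) * (Nat.centralBinom (k+1) : ℝ)
          = 2 * (2*(k:ℝ)+1) * (Nat.centralBinom k : ℝ) := by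
        have := Nat.succ_mul_centralBinom_succ k
        have := congrArg (fun m : ℕ => (m : ℝ)) this
        push_cast at this ⊢
        linarith [this]
      have ha : Real.sqrt k ^ 2 = k := Real.sq_sqrt (by positivity)
      have hb : Real.sqrt (k+1) ^ 2 = (k:ℝ)+1 := by
        rw [Real.sq_sqrt]; positivity
      have ha0 : 0 ≤ Real.sqrt k := Real.sqrt_nonneg _
      have hb0 : 0 ≤ Real.sqrt (k+1) := Real.sqrt_nonneg _
      have hC0 : (0:ℝ) ≤ (Nat.centralBinom k : ℝ) := by positivity
      -- key: 2 * √k * √(k+1) ≤ 2k+1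
      have key : 2 * Real.sqrt k * Real.sqrt (k+1) ≤ 2*(k:ℝ)+1 := by
        nlinarith [sq_nonneg (Real.sqrt k - Real.sqrt (k+1))]
      -- goal: 4^(k+1) ≤ 2 √(k+1) C_{k+1}
      have hpos : (0:ℝ) < (k:ℝ) + 1 := by positivity
      rw [pow_succ]
      have step : 4 * ((k:ℝ)+1) * (2 * Real.sqrt k * (Nat.centralBinom k : ℝ))
          ≤ ((k:ℝ)+1) * (2 * Real.sqrt (k+1) * (Nat.centralBinom (k+1) : ℝ)) := by
        have : ((k:ℝ)+1) * (2 * Real.sqrt (k+1) * (Nat.centralBinom (k+1) : ℝ))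
            = 2 * Real.sqrt (k+1) * (((k+1:ℕ):ℝ) * (Nat.centralBinom (k+1):ℝ)) := by
          push_cast; ring
        rw [this, hrec]
        -- need 8 (k+1) √k C ≤ 4 (2k+1) √(k+1) C
        have h2 : 2 * Real.sqrt k * ((k:ℝ)+1) ≤ Real.sqrt (k+1) * (2*(k:ℝ)+1) := by
          nlinarith [mul_le_mul_of_nonneg_left key hb0]
        nlinarith [h2, hC0]
      have := mul_le_mul_of_nonneg_left IH (le_of_lt (show (0:ℝ) < 4*((k:ℝ)+1) by positivity))
      have final := this.trans step
      have final2 : 4 ^ k * 4 ≤ 2 * Real.sqrt ((k:ℝ)+1) * (Nat.centralBinom (k+1) : ℝ) := by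
        nlinarith [final, hpos]
      have : ((k:ℝ)+1) = ((k+1:ℕ):ℝ) := by push_cast; ring
      rwa [this] at final2


def gsum (n : ℕ) : ℤ := ∑ j ∈ range (n+1), (n.choose j : ℤ) * |2*(j:ℤ) - n|

def Gval (n : ℕ) : ℤ :=
  if n % 2 = 0 then n * Nat.centralBinom (n/2) else 2 * n * Nat.centralBinom (n/2)

lemma abs_succ_add_abs_pred (m : ℤ) : |m+1| + |m-1| = 2*|m| + (if m = 0 then 2 else 0) := by
  rcases lt_trichotomy m 0 with h | h | h
  · rw [if_neg (by omega), abs_of_nonpos (by omega), abs_of_nonpos (by omega),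
      abs_of_nonpos (by omega)]; ring
  · simp [h]
  · rw [if_neg (by omega), abs_of_nonneg (by omega), abs_of_nonneg (by omega),
      abs_of_nonneg (by omega)]; ring

lemma gsum_rec (n : ℕ) : gsum (n+1) = 2 * gsum n
    + (if n % 2 = 0 then 2 * (n.choose (n/2) : ℤ) else 0) := by
  unfold gsum
  have h1 : ∑ j ∈ range (n+2), ((n+1).choose j : ℤ) * |2*(j:ℤ) - ((n:ℤ)+1)|
      = (∑ j ∈ range (n+1), ((n+1).choose (j+1) : ℤ) * |2*((j:ℤ)+1) - ((n:ℤ)+1)|)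
        + |0 - ((n:ℤ)+1)| := by
    rw [Finset.sum_range_succ'
      (fun j => ((n+1).choose j : ℤ) * |2*(j:ℤ) - ((n:ℤ)+1)|) (n+1)]
    simp
  have h2 : ∀ j, ((n+1).choose (j+1) : ℤ) = (n.choose j : ℤ) + (n.choose (j+1) : ℤ) := by
    intro j; exact_mod_cast congrArg (fun m : ℕ => (m:ℤ)) (Nat.choose_succ_succ (n) (j))
  have h3 : ∑ j ∈ range (n+1), ((n.choose (j+1) : ℤ)) * |2*((j:ℤ)+1) - ((n:ℤ)+1)|
        + |0 - ((n:ℤ)+1)|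
      = ∑ j ∈ range (n+1), (n.choose j : ℤ) * |2*(j:ℤ) - ((n:ℤ)+1)| := by
    have := (Finset.sum_range_succ'
      (fun j => ((n).choose j : ℤ) * |2*(j:ℤ) - ((n:ℤ)+1)|) (n)).symm
    simp only [Nat.choose_zero_right, Nat.cast_one, one_mul, Nat.cast_zero, mul_zero] at this ⊢
    rw [← this]
    rw [Finset.sum_range_succ]
    simp [Nat.choose_succ_self]
  have push : ∀ j : ℕ, ((n:ℤ)+1) = ((n+1 : ℕ) : ℤ) := by intro _; push_cast; ring
  calc ∑ j ∈ range (n+1+1), ((n+1).choose j : ℤ) * |2*(j:ℤ) - ((n+1:ℕ):ℤ)|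
      = ∑ j ∈ range (n+2), ((n+1).choose j : ℤ) * |2*(j:ℤ) - ((n:ℤ)+1)| := by
        refine Finset.sum_congr rfl (fun j _ => ?_)
        push_cast
        ring_nf
    _ = (∑ j ∈ range (n+1), ((n+1).choose (j+1) : ℤ) * |2*((j:ℤ)+1) - ((n:ℤ)+1)|)
        + |0 - ((n:ℤ)+1)| := h1
    _ = (∑ j ∈ range (n+1), ((n.choose j : ℤ) + (n.choose (j+1) : ℤ)) * |2*((j:ℤ)+1) - ((n:ℤ)+1)|)
        + |0 - ((n:ℤ)+1)| := by rw [Finset.sum_congr rfl (fun j _ => by rw [h2 j])]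
    _ = (∑ j ∈ range (n+1), (n.choose j : ℤ) * |2*((j:ℤ)+1) - ((n:ℤ)+1)|)
        + ((∑ j ∈ range (n+1), (n.choose (j+1) : ℤ) * |2*((j:ℤ)+1) - ((n:ℤ)+1)|)
          + |0 - ((n:ℤ)+1)|) := by
        simp only [add_mul]
        rw [Finset.sum_add_distrib, add_assoc]
    _ = (∑ j ∈ range (n+1), (n.choose j : ℤ) * |2*((j:ℤ)+1) - ((n:ℤ)+1)|)
        + ∑ j ∈ range (n+1), (n.choose j : ℤ) * |2*(j:ℤ) - ((n:ℤ)+1)| := by rw [h3]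
    _ = ∑ j ∈ range (n+1), (n.choose j : ℤ) *
          (|(2*(j:ℤ) - n) + 1| + |(2*(j:ℤ) - n) - 1|) := by
        rw [← Finset.sum_add_distrib]
        refine Finset.sum_congr rfl (fun j _ => ?_)
        rw [mul_add]
        congr 2 <;> ring_nf
    _ = ∑ j ∈ range (n+1), ((n.choose j : ℤ) * (2*|2*(j:ℤ) - n|)
          + (if 2*(j:ℤ) - n = 0 then 2 * (n.choose j : ℤ) else 0)) := by
        refine Finset.sum_congr rfl (fun j _ => ?_)
        rw [abs_succ_add_abs_pred, mul_add]
        congr 1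
        split <;> ring
    _ = 2 * (∑ j ∈ range (n+1), (n.choose j : ℤ) * |2*(j:ℤ) - n|)
        + ∑ j ∈ range (n+1), (if 2*(j:ℤ) - n = 0 then 2 * (n.choose j : ℤ) else 0) := by
        rw [Finset.sum_add_distrib]
        congr 1
        rw [Finset.mul_sum]
        exact Finset.sum_congr rfl (fun j _ => by ring)
    _ = 2 * (∑ j ∈ range (n+1), (n.choose j : ℤ) * |2*(j:ℤ) - n|)
        + (if n % 2 = 0 then 2 * (n.choose (n/2) : ℤ) else 0) := by
        congr 1
        by_cases hev : n % 2 = 0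
        · rw [if_pos hev]
          rw [Finset.sum_eq_single (n/2)]
          · rw [if_pos (by push_cast; omega)]
          · intro j hj hne
            rw [if_neg]
            intro hc
            apply hne
            omega
          · intro h; exact absurd (Finset.mem_range.2 (by omega)) h
        · rw [if_neg hev]
          apply Finset.sum_eq_zero
          intro j hj
          rw [if_neg]
          intro hc; omega

lemma gsum_eq (n : ℕ) : gsum n = Gval n := by
  induction n with
  | zero => simp [gsum, Gval, Nat.centralBinom]
  | succ n ih =>
    rw [gsum_rec, ih]
    unfold Gval
    by_cases hev : n % 2 = 0
    · rw [if_pos hev, if_pos hev, if_neg (by omega)]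
      have h2 : (n+1)/2 = n/2 := by omega
      have hc : n.choose (n/2) = Nat.centralBinom (n/2) := by
        unfold Nat.centralBinom
        congr 1
        omega
      rw [h2, hc]
      push_cast
      ring
    · rw [if_neg hev, if_neg hev, if_pos (by omega)]
      have h2 : (n+1)/2 = n/2 + 1 := by omega
      rw [h2]
      have key := Nat.succ_mul_centralBinom_succ (n/2)
      have keyZ : ((n/2 : ℕ) + 1 : ℤ) * Nat.centralBinom (n/2 + 1)
          = 2 * (2*(n/2 : ℕ) + 1) * Nat.centralBinom (n/2) := by exact_mod_cast key
      have hn : (n : ℤ) = 2*(n/2 : ℕ) + 1 := by omega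
      have hcast : ((n+1:ℕ):ℤ) = 2 * ((n/2:ℕ) + 1) := by push_cast; omega
      rw [add_zero, hn, hcast]
      linear_combination (-2) * keyZ


-- Lemma A: sign flip
lemma flip_sum_zero {n : ℕ} (i : Fin n) (F : (Fin n → ℝ) → ℝ)
    (hF : ∀ ε : Fin n → ℝ, F (Function.update ε i (-(ε i))) = F ε) :
    ∑ ε ∈ Fintype.piFinset (fun _ : Fin n => ({-1, 1} : Finset ℝ)), ε i * F ε = 0 := by
  apply Finset.sum_involution (g := fun ε _ => Function.update ε i (-(ε i)))
  · intro ε hε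
    simp only [Function.update_self]
    rw [hF]
    ring
  · intro ε hε hne
    intro hc
    have := congrFun hc i
    simp only [Function.update_self] at this
    have hzero : ε i = 0 := by linarith
    rw [hzero] at hne
    simp at hne
  · intro ε hε
    funext k
    by_cases hk : k = i
    · subst hk; simp
    · simp [Function.update_of_ne hk]
  · intro ε hε
    rw [Fintype.mem_piFinset] at hε ⊢
    intro k
    by_cases hk : k = i
    · subst hk
      simp only [Function.update_self]
      have := hε k
      simp only [Finset.mem_insert, Finset.mem_singleton] at this ⊢
      rcases this with h | h <;> rw [h] <;> norm_num
    · rw [Function.update_of_ne hk]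
      exact hε k

-- Lemma B: bijection to powerset
lemma abs_sum_piFinset (n : ℕ) :
    ∑ ε ∈ Fintype.piFinset (fun _ : Fin n => ({-1, 1} : Finset ℝ)), |∑ i, ε i|
      = ∑ j ∈ range (n+1), (n.choose j : ℝ) * |2*(j:ℝ) - n| := by
  have main : ∑ ε ∈ Fintype.piFinset (fun _ : Fin n => ({-1, 1} : Finset ℝ)), |∑ i, ε i|
      = ∑ A ∈ (Finset.univ : Finset (Fin n)).powerset, |2*(#A : ℝ) - n| := by
    refine Finset.sum_nbij' (i := fun ε => Finset.univ.filter (fun k => ε k = 1))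
      (j := fun A k => if k ∈ A then (1:ℝ) else -1) ?_ ?_ ?_ ?_ ?_
    · intro ε hε; exact Finset.mem_powerset.2 (Finset.filter_subset _ _)
    · intro A hA
      rw [Fintype.mem_piFinset]
      intro k
      by_cases h : k ∈ A <;> simp [h]
    · intro ε hε
      rw [Fintype.mem_piFinset] at hε
      funext k
      have := hε k
      simp only [Finset.mem_insert, Finset.mem_singleton] at this
      by_cases h : ε k = 1 <;> simp [h]
      · rcases this with h' | h'
        · exact h'.symm
        · exact absurd h' h
    · intro A hA
      ext k
      simp only [Finset.mem_filter, Finset.mem_univ, true_and]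
      by_cases h : k ∈ A <;> simp [h]
      norm_num
    · intro ε hε
      rw [Fintype.mem_piFinset] at hε
      congr 1
      have hrw : ∀ k : Fin n, ε k = 2 * (if ε k = 1 then (1:ℝ) else 0) - 1 := by
        intro k
        have := hε k
        simp only [Finset.mem_insert, Finset.mem_singleton] at this
        rcases this with h | h <;> simp [h] <;> norm_num
      calc ∑ k, ε k = ∑ k : Fin n, (2 * (if ε k = 1 then (1:ℝ) else 0) - 1) :=
            Finset.sum_congr rfl (fun k _ => hrw k)
        _ = 2 * (∑ k : Fin n, if ε k = 1 then (1:ℝ) else 0) - n := by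
            rw [Finset.sum_sub_distrib, Finset.mul_sum]
            simp
        _ = 2 * (#(Finset.univ.filter (fun k => ε k = 1)) : ℝ) - n := by
            rw [Finset.sum_boole]
  rw [main, Finset.sum_powerset_apply_card (fun j => |2*(j:ℝ) - (n:ℝ)|)]
  simp [Finset.card_univ, nsmul_eq_mul]

lemma Gval_lower (n : ℕ) (hn : 1 ≤ n) :
    2^n * Real.sqrt n / Real.sqrt 2 ≤ ((Gval n : ℤ) : ℝ) := by
  have h2 : (0:ℝ) < Real.sqrt 2 := by positivity
  rw [div_le_iff₀ h2]
  rcases Nat.even_or_odd n with ⟨k, hk⟩ | ⟨k, hk⟩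
  · -- n = 2k, k ≥ 1
    have hk1 : 1 ≤ k := by omega
    have hG : ((Gval n : ℤ) : ℝ) = (n:ℝ) * (Nat.centralBinom k : ℝ) := by
      unfold Gval
      rw [if_pos (by omega)]
      have : n / 2 = k := by omega
      rw [this]; push_cast; ring
    have hn2 : (n:ℝ) = 2 * k := by push_cast [hk]; ring
    have hsq : Real.sqrt n = Real.sqrt 2 * Real.sqrt k := by
      rw [hn2, Real.sqrt_mul (by norm_num)]
    have hpow : (2:ℝ)^n = 4^k := by
      rw [show n = 2*k by omega, pow_mul]; norm_num
    have hL4 := centralBinom_sqrt_bound k hk1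
    have hsk : Real.sqrt k * Real.sqrt k = (k:ℝ) := Real.mul_self_sqrt (by positivity)
    have hsk0 : 0 ≤ Real.sqrt k := Real.sqrt_nonneg _
    have hC0 : (0:ℝ) ≤ (Nat.centralBinom k : ℝ) := by positivity
    rw [hG, hsq, hpow, hn2]
    -- goal : 4^k * (√2 * √k) ≤ 2k * C * √2
    calc (4:ℝ)^k * (Real.sqrt 2 * Real.sqrt k)
        ≤ (2 * Real.sqrt k * (Nat.centralBinom k : ℝ)) * (Real.sqrt 2 * Real.sqrt k) := by
          gcongr
      _ = 2 * (Real.sqrt k * Real.sqrt k) * (Nat.centralBinom k : ℝ) * Real.sqrt 2 := by ring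
      _ = 2 * (k:ℝ) * (Nat.centralBinom k : ℝ) * Real.sqrt 2 := by rw [hsk]
  · -- n = 2k+1
    have hG : ((Gval n : ℤ) : ℝ) = 2 * (n:ℝ) * (Nat.centralBinom k : ℝ) := by
      unfold Gval
      rw [if_neg (by omega)]
      have : n / 2 = k := by omega
      rw [this]; push_cast; ring
    rcases Nat.eq_zero_or_pos k with h0 | hk1
    · have hn1 : n = 1 := by omega
      subst hn1
      rw [hG]
      have hc : (Nat.centralBinom 0 : ℝ) = 1 := by norm_num [Nat.centralBinom]
      rw [h0, hc]
      simp only [Nat.cast_one, Real.sqrt_one, pow_one, mul_one]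
      have h1 : (1:ℝ) ≤ Real.sqrt 2 := by
        rw [show (1:ℝ) = Real.sqrt 1 by simp]
        exact Real.sqrt_le_sqrt (by norm_num)
      linarith
    · have hL4 := centralBinom_sqrt_bound k hk1
      have hpow : (2:ℝ)^n = 2 * 4^k := by
        rw [show n = 2*k+1 by omega, pow_succ, pow_mul]
        norm_num
        ring
      have hsn0 : 0 ≤ Real.sqrt n := Real.sqrt_nonneg _
      have hC0 : (0:ℝ) ≤ (Nat.centralBinom k : ℝ) := by positivity
      have hA : Real.sqrt 2 * Real.sqrt k ≤ Real.sqrt n := by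
        rw [← Real.sqrt_mul (by norm_num)]
        apply Real.sqrt_le_sqrt
        push_cast [hk]; linarith
      have hnn : Real.sqrt n * Real.sqrt n = (n:ℝ) := Real.mul_self_sqrt (by positivity)
      have hs2 : Real.sqrt 2 * Real.sqrt 2 = 2 := Real.mul_self_sqrt (by norm_num)
      rw [hG, hpow, ← mul_le_mul_iff_of_pos_right h2]
      calc 2 * (4:ℝ)^k * Real.sqrt n * Real.sqrt 2
          ≤ 2 * (2 * Real.sqrt k * (Nat.centralBinom k : ℝ)) * Real.sqrt n * Real.sqrt 2 := by
            gcongr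
        _ = 4 * (Nat.centralBinom k : ℝ) * (Real.sqrt 2 * Real.sqrt k) * Real.sqrt n := by ring
        _ ≤ 4 * (Nat.centralBinom k : ℝ) * Real.sqrt n * Real.sqrt n := by
            calc 4 * (Nat.centralBinom k : ℝ) * (Real.sqrt 2 * Real.sqrt k) * Real.sqrt n
                ≤ 4 * (Nat.centralBinom k : ℝ) * Real.sqrt n * Real.sqrt n := by
                  gcongr
            _ = _ := rfl
        _ = 4 * (Nat.centralBinom k : ℝ) * (n:ℝ) := by rw [mul_assoc, hnn]
        _ = 2 * (n:ℝ) * (Nat.centralBinom k : ℝ) * Real.sqrt 2 * Real.sqrt 2 := by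
            linear_combination (-2*(n:ℝ)*(Nat.centralBinom k:ℝ)) * hs2


theorem delayed_feedback_regret_lower_bound
    (n τ : ℕ) (hn : 1 ≤ n) (hτ : 1 ≤ τ)
    (T : ℕ) (hT : T = n * τ)
    (w : Fin n → Fin τ → (Fin n → ℝ) → ℝ)
    (hrange : ∀ i j ε, w i j ε ∈ Set.Icc (-1 : ℝ) 1)
    (hmeas : ∀ (i : Fin n) (j : Fin τ) (ε ε' : Fin n → ℝ),
      (∀ k : Fin n, k < i → ε k = ε' k) → w i j ε = w i j ε') :
    (τ : ℝ) * Real.sqrt n / Real.sqrt 2 ≤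
      ((2 : ℝ) ^ n)⁻¹ *
        ∑ ε ∈ Fintype.piFinset (fun _ : Fin n => ({-1, 1} : Finset ℝ)),
          ((∑ i : Fin n, ∑ j : Fin τ, ε i * w i j ε) + (τ : ℝ) * |∑ i : Fin n, ε i|) := by
  classical
  have hflip : ∀ (i : Fin n) (j : Fin τ),
      ∑ ε ∈ Fintype.piFinset (fun _ : Fin n => ({-1, 1} : Finset ℝ)), ε i * w i j ε = 0 := by
    intro i j
    apply flip_sum_zero
    intro ε
    apply hmeas
    intro k hk
    exact Function.update_of_ne (ne_of_lt hk) _ _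
  have hzero : ∑ ε ∈ Fintype.piFinset (fun _ : Fin n => ({-1, 1} : Finset ℝ)),
      ∑ i : Fin n, ∑ j : Fin τ, ε i * w i j ε = 0 := by
    rw [Finset.sum_comm]
    apply Finset.sum_eq_zero
    intro i _
    rw [Finset.sum_comm]
    apply Finset.sum_eq_zero
    intro j _
    exact hflip i j
  have hcast : ((gsum n : ℤ) : ℝ) = ∑ j ∈ range (n+1), (n.choose j : ℝ) * |2*(j:ℝ) - n| := by
    unfold gsum
    push_cast
    rfl
  have habs : ∑ ε ∈ Fintype.piFinset (fun _ : Fin n => ({-1, 1} : Finset ℝ)),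
      |∑ i : Fin n, ε i| = ((Gval n : ℤ) : ℝ) := by
    rw [abs_sum_piFinset, ← hcast, gsum_eq]
  have hsplit : ∑ ε ∈ Fintype.piFinset (fun _ : Fin n => ({-1, 1} : Finset ℝ)),
      ((∑ i : Fin n, ∑ j : Fin τ, ε i * w i j ε) + (τ : ℝ) * |∑ i : Fin n, ε i|)
      = (τ : ℝ) * ((Gval n : ℤ) : ℝ) := by
    rw [Finset.sum_add_distrib, hzero, zero_add, ← Finset.mul_sum, habs]
  rw [hsplit]
  have hG := Gval_lower n hn
  have hτ0 : (0:ℝ) ≤ (τ:ℝ) := by positivity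
  have h2n : (0:ℝ) < (2:ℝ)^n := by positivity
  have hs2 : (0:ℝ) < Real.sqrt 2 := by positivity
  calc (τ : ℝ) * Real.sqrt n / Real.sqrt 2
      = ((2:ℝ)^n)⁻¹ * ((τ:ℝ) * (2^n * Real.sqrt n / Real.sqrt 2)) := by
        field_simp
    _ ≤ ((2:ℝ)^n)⁻¹ * ((τ:ℝ) * ((Gval n : ℤ) : ℝ)) := by gcongr
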